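/- Let μ be a nontrivial Radon outer measure on ℝ^n satisfying r^p/C ≤ μ(B_r(x)) ≤ C r^q for all x ∈ spt μ, r ∈ (0, r̄), with q ≤ min{n, p}. Then for every ε > 0, every h > np/q − q, and every nonempty bounded open Ω ⊂ ℝ^n, there exists an open set A ⊂ Ω with μ(A) < ε and Ω ∩ spt μ ⊂ b^{μ,h}(A) ⊂ closure(Ω) ∩ spt μ. -/

import Mathlib

open MeasureTheory Metric Filter Set Topology
open scoped ENNReal

noncomputable section

/-- The support of a measure `μ` on `ℝ^n`: points all of whose balls have positive measure. -/
def spt {n : ℕ} (μ : Measure (EuclideanSpace ℝ (Fin n))) : Set (EuclideanSpace ℝ (Fin n)) :=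
  {x | ∀ r : ℝ, 0 < r → 0 < μ (Metric.ball x r)}

/-- The set of `h`-superdensity points of `E` with respect to `μ`. -/
def sdp {n : ℕ} (μ : Measure (EuclideanSpace ℝ (Fin n))) (h : ℝ)
    (E : Set (EuclideanSpace ℝ (Fin n))) : Set (EuclideanSpace ℝ (Fin n)) :=
  {x | x ∈ spt μ ∧
    Filter.Tendsto
      (fun r : ℝ => μ (Metric.ball x r \ E) / (μ (Metric.ball x r) * ENNReal.ofReal (r ^ h)))
      (nhdsWithin 0 (Set.Ioi 0)) (nhds 0)}

/-- The base operator `b^{μ,h}` associated to `μ` and `h`. -/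
def baseOp {n : ℕ} (μ : Measure (EuclideanSpace ℝ (Fin n))) (h : ℝ)
    (A : Set (EuclideanSpace ℝ (Fin n))) : Set (EuclideanSpace ℝ (Fin n)) :=
  {x | x ∈ spt μ ∧
    0 < Filter.limsup
      (fun r : ℝ => μ (Metric.ball x r ∩ A) / (μ (Metric.ball x r) * ENNReal.ofReal (r ^ h)))
      (nhdsWithin 0 (Set.Ioi 0))}

/-- Maximal δ-separated subset of a finite set. -/
lemma exists_maximal_separated {X : Type*} [MetricSpace X] (F : Finset X) {δ : ℝ} (hδ : 0 < δ) :
    ∃ G : Finset X, G ⊆ F ∧ (∀ g₁ ∈ G, ∀ g₂ ∈ G, g₁ ≠ g₂ → δ ≤ dist g₁ g₂) ∧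
      ∀ y ∈ F, ∃ g ∈ G, dist y g < δ := by
  classical
  set 𝒮 := F.powerset.filter (fun G => ∀ g₁ ∈ G, ∀ g₂ ∈ G, g₁ ≠ g₂ → δ ≤ dist g₁ g₂) with h𝒮
  have hne : 𝒮.Nonempty := ⟨∅, by simp [h𝒮]⟩
  obtain ⟨G, hG, hmax⟩ := Finset.exists_max_image 𝒮 Finset.card hne
  rw [h𝒮, Finset.mem_filter, Finset.mem_powerset] at hG
  refine ⟨G, hG.1, hG.2, fun y hy => ?_⟩
  by_contra hcon
  push_neg at hcon
  have hyG : y ∉ G := fun hyG => absurd (hcon y hyG) (by simp [hδ])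
  have hins : insert y G ∈ 𝒮 := by
    rw [h𝒮, Finset.mem_filter, Finset.mem_powerset]
    refine ⟨Finset.insert_subset hy hG.1, ?_⟩
    intro g₁ hg₁ g₂ hg₂ hne12
    rcases Finset.mem_insert.1 hg₁ with h1 | h1 <;> rcases Finset.mem_insert.1 hg₂ with h2 | h2
    · exact absurd (h1.trans h2.symm) hne12
    · rw [h1]; exact hcon g₂ h2
    · rw [h2, dist_comm]; exact hcon g₁ h1
    · exact hG.2 g₁ h1 g₂ h2 hne12
  have := hmax _ hins
  simp [Finset.card_insert_of_notMem hyG] at this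

lemma card_le_of_separated {n : ℕ} (hn : 0 < n) (G : Finset (EuclideanSpace ℝ (Fin n)))
    {δ R : ℝ} (hδ : 0 < δ) (hR : 0 < R)
    (hsep : ∀ g₁ ∈ G, ∀ g₂ ∈ G, g₁ ≠ g₂ → δ ≤ dist g₁ g₂)
    (hsub : ∀ g ∈ G, g ∈ ball (0 : EuclideanSpace ℝ (Fin n)) R) :
    (G.card : ℝ≥0∞) ≤ ENNReal.ofReal ((R + δ/2)^n / (δ/2)^n) := by
  classical
  haveI : Nontrivial (EuclideanSpace ℝ (Fin n)) :=
    Module.nontrivial_of_finrank_pos (R := ℝ) (by rw [finrank_euclideanSpace_fin]; exact hn)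
  set v := volume (ball (0 : EuclideanSpace ℝ (Fin n)) 1) with hv
  have hv0 : v ≠ 0 := (measure_ball_pos volume _ one_pos).ne'
  have hvt : v ≠ ⊤ := measure_ball_lt_top.ne
  have hδ2 : (0:ℝ) < δ/2 := by linarith
  have hdisj : (↑G : Set (EuclideanSpace ℝ (Fin n))).PairwiseDisjoint
      (fun g => ball g (δ/2)) := by
    intro g₁ hg₁ g₂ hg₂ hne
    apply ball_disjoint_ball
    calc δ/2 + δ/2 = δ := by ring
    _ ≤ dist g₁ g₂ := hsep g₁ hg₁ g₂ hg₂ hne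
  have hvol : ∀ g : EuclideanSpace ℝ (Fin n), ∀ r : ℝ, 0 ≤ r →
      volume (ball g r) = ENNReal.ofReal (r ^ n) * v := by
    intro g r hr
    rw [hv, Measure.addHaar_ball volume g hr, finrank_euclideanSpace_fin]
  have hunion : (⋃ g ∈ G, ball g (δ/2)) ⊆ ball (0 : EuclideanSpace ℝ (Fin n)) (R + δ/2) := by
    intro z hz
    simp only [Set.mem_iUnion] at hz
    obtain ⟨g, hg, hzg⟩ := hz
    have := hsub g hg
    rw [mem_ball] at *
    calc dist z 0 ≤ dist z g + dist g 0 := dist_triangle _ _ _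
    _ < δ/2 + R := by linarith
    _ = R + δ/2 := by ring
  have hsum : (G.card : ℝ≥0∞) * (ENNReal.ofReal ((δ/2) ^ n) * v) ≤
      ENNReal.ofReal ((R + δ/2) ^ n) * v := by
    calc (G.card : ℝ≥0∞) * (ENNReal.ofReal ((δ/2) ^ n) * v)
        = ∑ g ∈ G, volume (ball g (δ/2)) := by
          rw [Finset.sum_congr rfl (fun g _ => hvol g (δ/2) hδ2.le), Finset.sum_const,
            nsmul_eq_mul]
      _ = volume (⋃ g ∈ G, ball g (δ/2)) :=
          (measure_biUnion_finset hdisj (fun _ _ => measurableSet_ball)).symm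
      _ ≤ volume (ball (0 : EuclideanSpace ℝ (Fin n)) (R + δ/2)) := measure_mono hunion
      _ = ENNReal.ofReal ((R + δ/2) ^ n) * v := hvol _ _ (by linarith)
  rw [← mul_assoc] at hsum
  have h2 : (G.card : ℝ≥0∞) * ENNReal.ofReal ((δ/2) ^ n) ≤ ENNReal.ofReal ((R + δ/2) ^ n) :=
    (ENNReal.mul_le_mul_iff_left hv0 hvt).mp hsum
  rw [ENNReal.ofReal_div_of_pos (by positivity)]
  rw [ENNReal.le_div_iff_mul_le (Or.inl (by simp [ENNReal.ofReal_eq_zero]; positivity))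
    (Or.inl ENNReal.ofReal_ne_top)]
  exact h2

set_option maxHeartbeats 2000000 in
theorem stmt_12 {n : ℕ} (μ : Measure (EuclideanSpace ℝ (Fin n)))
    [IsLocallyFiniteMeasure μ] [μ.Regular] (hspt : (spt μ).Nonempty)
    (C p q rbar : ℝ) (hC : 0 < C) (hp : 0 < p) (hq : 0 < q) (hrbar : 0 < rbar)
    (hqmin : q ≤ min (n : ℝ) p)
    (hbound : ∀ x ∈ spt μ, ∀ r : ℝ, 0 < r → r < rbar →
      ENNReal.ofReal (r ^ p / C) ≤ μ (Metric.ball x r) ∧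
        μ (Metric.ball x r) ≤ ENNReal.ofReal (C * r ^ q)) :
    ∀ ε : ℝ, 0 < ε → ∀ h : ℝ, (n : ℝ) * p / q - q < h →
      ∀ Ω : Set (EuclideanSpace ℝ (Fin n)), IsOpen Ω → Ω.Nonempty → Bornology.IsBounded Ω →
        ∃ A : Set (EuclideanSpace ℝ (Fin n)), IsOpen A ∧ A ⊆ Ω ∧
          μ A < ENNReal.ofReal ε ∧
          Ω ∩ spt μ ⊆ baseOp μ h A ∧ baseOp μ h A ⊆ closure Ω ∩ spt μ := by
  intro ε hε h hh Ω hΩo hΩne hΩbd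
  classical
  have hqn : q ≤ (n : ℝ) := hqmin.trans (min_le_left _ _)
  have hqp : q ≤ p := hqmin.trans (min_le_right _ _)
  have hn0 : (0:ℝ) < n := lt_of_lt_of_le hq hqn
  have hnn : 0 < n := by exact_mod_cast hn0
  have key : (n : ℝ) / q < (q + h) / p := by
    rw [div_lt_div_iff₀ hq hp]
    have h1 : (n : ℝ) * p < (q + h) * q := by
      have := (div_lt_iff₀ hq).mp (by linarith : (n : ℝ) * p / q < q + h)
      linarith
    linarith
  set t := ((n : ℝ) / q + (q + h) / p) / 2 with ht_def
  have ht1 : (n : ℝ) / q < t := by rw [ht_def]; linarith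
  have ht2 : t < (q + h) / p := by rw [ht_def]; linarith
  have htq : (n : ℝ) < t * q := (div_lt_iff₀ hq).mp ht1
  have htp : t * p < q + h := (lt_div_iff₀ hp).mp ht2
  have ht_one : 1 ≤ t := by
    have : (1:ℝ) ≤ n / q := by rw [le_div_iff₀ hq]; linarith
    linarith
  set a := t * q - (n : ℝ) with ha_def
  have ha : 0 < a := by rw [ha_def]; linarith
  set γ := (1/2 : ℝ) ^ a with hγ_def
  have hγ0 : 0 < γ := Real.rpow_pos_of_pos (by norm_num) _
  have hγ1 : γ < 1 := Real.rpow_lt_one (by norm_num) (by norm_num) ha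
  obtain ⟨R, hR0, hRΩ⟩ := hΩbd.subset_ball_lt 0 0
  set β := C * (4 * (R + 1)) ^ n with hβ_def
  have hβ : 0 < β := by rw [hβ_def]; positivity
  -- choose K
  obtain ⟨K₁, hK₁⟩ := exists_pow_lt_of_lt_one hrbar (by norm_num : (1/2 : ℝ) < 1)
  obtain ⟨K₂, hK₂⟩ := exists_pow_lt_of_lt_one
    (show (0:ℝ) < ε * (1 - γ) / β by
      have h1γ : (0:ℝ) < 1 - γ := by linarith
      positivity) hγ1
  set K := max K₁ K₂ with hK_def
  have hKr : (1/2 : ℝ) ^ K < rbar :=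
    lt_of_le_of_lt (pow_le_pow_of_le_one (by norm_num) (by norm_num) (le_max_left _ _)) hK₁
  have hKε : γ ^ K < ε * (1 - γ) / β :=
    lt_of_le_of_lt (pow_le_pow_of_le_one hγ0.le hγ1.le (le_max_right _ _)) hK₂
  set rk : ℕ → ℝ := fun k => (1/2 : ℝ) ^ (k + K) with hrk_def
  have hrk0 : ∀ k, 0 < rk k := fun k => by positivity
  have hrk1 : ∀ k, rk k ≤ 1 := fun k => pow_le_one₀ (by norm_num) (by norm_num)
  have hrkr : ∀ k, rk k < rbar := fun k =>
    lt_of_le_of_lt (pow_le_pow_of_le_one (by norm_num) (by norm_num) (Nat.le_add_left K k)) hKr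
  set ρ : ℕ → ℝ := fun k => rk k ^ t with hρ_def
  have hρ0 : ∀ k, 0 < ρ k := fun k => Real.rpow_pos_of_pos (hrk0 k) _
  have hρr : ∀ k, ρ k ≤ rk k := fun k => by
    have := Real.rpow_le_rpow_of_exponent_ge (hrk0 k) (hrk1 k) ht_one
    rwa [Real.rpow_one] at this
  set S : ℕ → Set (EuclideanSpace ℝ (Fin n)) :=
    fun k => {y | y ∈ spt μ ∧ ball y (rk k) ⊆ Ω} with hS_def
  have hSΩ : ∀ k, S k ⊆ Ω := fun k y hy => hy.2 (mem_ball_self (hrk0 k))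
  -- nets
  have hnet : ∀ k, ∃ G : Finset (EuclideanSpace ℝ (Fin n)), (↑G ⊆ S k) ∧
      (∀ g₁ ∈ G, ∀ g₂ ∈ G, g₁ ≠ g₂ → rk k / 2 ≤ dist g₁ g₂) ∧
      (∀ y ∈ S k, ∃ g ∈ G, dist y g < rk k) := by
    intro k
    have htb : TotallyBounded (S k) :=
      TotallyBounded.subset ((hSΩ k).trans subset_closure)
        hΩbd.isCompact_closure.totallyBounded
    obtain ⟨tset, hts, htfin, htcov⟩ :=
      finite_approx_of_totallyBounded htb (rk k / 2) (by have := hrk0 k; positivity)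
    obtain ⟨G, hGF, hGsep', hGcov'⟩ :=
      exists_maximal_separated htfin.toFinset (δ := rk k / 2) (by have := hrk0 k; positivity)
    refine ⟨G, ?_, hGsep', ?_⟩
    · intro g hg
      exact hts (htfin.mem_toFinset.mp (hGF hg))
    · intro y hy
      obtain ⟨f, hf, hyf⟩ := Set.mem_iUnion₂.mp (htcov hy)
      obtain ⟨g, hgG, hfg⟩ := hGcov' f (htfin.mem_toFinset.mpr hf)
      refine ⟨g, hgG, ?_⟩
      rw [mem_ball] at hyf
      calc dist y g ≤ dist y f + dist f g := dist_triangle _ _ _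
      _ < rk k / 2 + rk k / 2 := by linarith
      _ = rk k := by ring
  choose G hGsub hGsep hGcov using hnet
  set A : Set (EuclideanSpace ℝ (Fin n)) := ⋃ k, ⋃ g ∈ G k, ball g (ρ k) with hA_def
  have hAopen : IsOpen A := isOpen_iUnion fun k => isOpen_biUnion fun g _ => isOpen_ball
  have hAΩ : A ⊆ Ω := by
    rw [hA_def]
    refine Set.iUnion_subset fun k => Set.iUnion₂_subset fun g hg => ?_
    have hgS : g ∈ S k := hGsub k hg
    exact (ball_subset_ball (hρr k)).trans hgS.2
  refine ⟨A, hAopen, hAΩ, ?_, ?_, ?_⟩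
  · -- measure bound
    have hcard : ∀ k, ((G k).card : ℝ≥0∞) ≤
        ENNReal.ofReal ((R + (rk k / 2) / 2) ^ n / ((rk k / 2) / 2) ^ n) := by
      intro k
      refine card_le_of_separated hnn (G k) (by have := hrk0 k; positivity) hR0 (hGsep k) ?_
      intro g hg
      exact hRΩ (hSΩ k (hGsub k hg))
    have hballμ : ∀ k, ∀ g ∈ G k, μ (ball g (ρ k)) ≤ ENNReal.ofReal (C * ρ k ^ q) := by
      intro k g hg
      exact (hbound g (hGsub k hg).1 (ρ k) (hρ0 k) (lt_of_le_of_lt (hρr k) (hrkr k))).2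
    have hreal : ∀ k, (R + (rk k / 2) / 2) ^ n / ((rk k / 2) / 2) ^ n * (C * ρ k ^ q) ≤
        β * γ ^ (k + K) := by
      intro k
      have hr0 := hrk0 k
      have hr1 := hrk1 k
      have e1 : ρ k ^ q = rk k ^ a * rk k ^ (n : ℕ) := by
        rw [hρ_def]
        rw [← Real.rpow_mul hr0.le t q, ← Real.rpow_natCast (rk k) n,
          ← Real.rpow_add hr0]
        congr 1
        rw [ha_def]; ring
      have e4 : rk k ^ a = γ ^ (k + K) := by
        show ((1/2 : ℝ) ^ (k + K) : ℝ) ^ a = ((1/2 : ℝ) ^ a) ^ (k + K)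
        rw [← Real.rpow_natCast (1/2 : ℝ) (k + K), ← Real.rpow_mul (by norm_num),
          mul_comm, Real.rpow_mul (by norm_num), Real.rpow_natCast]
      rw [e1, e4]
      have hrkn : (0:ℝ) < rk k ^ n := by positivity
      have hγk : (0:ℝ) ≤ γ ^ (k + K) := by positivity
      have heq : (R + (rk k / 2) / 2) ^ n / ((rk k / 2) / 2) ^ n *
          (C * (γ ^ (k + K) * rk k ^ n))
          = (R + rk k / 4) ^ n * 4 ^ n * C * γ ^ (k + K) := by
        rw [div_pow]
        field_simp
        ring_nf
        rw [show (4:ℝ) ^ n = 2 ^ (n * 2) by rw [show n * 2 = 2 * n from mul_comm n 2, pow_mul]; norm_num]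
        have h2 : ((1:ℝ)/2)^n * (2^n)^2 = 2^n := by rw [pow_two, ← mul_assoc, ← mul_pow]; norm_num
        rw [pow_mul, mul_assoc (rk k ^ n) ((1/2:ℝ)^n), h2]
      rw [heq, hβ_def, mul_pow]
      have h5 : (R + rk k / 4) ^ n ≤ (R + 1) ^ n :=
        pow_le_pow_left₀ (by positivity) (by linarith) n
      calc (R + rk k / 4) ^ n * 4 ^ n * C * γ ^ (k + K)
          ≤ (R + 1) ^ n * 4 ^ n * C * γ ^ (k + K) := by
            have : (0:ℝ) ≤ 4 ^ n * C * γ ^ (k + K) := by positivity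
            nlinarith [mul_le_mul_of_nonneg_right h5 this]
        _ = C * ((4:ℝ) ^ n * (R + 1) ^ n) * γ ^ (k + K) := by ring
    have hAk : ∀ k, μ (⋃ g ∈ G k, ball g (ρ k)) ≤ ENNReal.ofReal (β * γ ^ (k + K)) := by
      intro k
      calc μ (⋃ g ∈ G k, ball g (ρ k)) ≤ ∑ g ∈ G k, μ (ball g (ρ k)) :=
            measure_biUnion_finset_le _ _
        _ ≤ ∑ _g ∈ G k, ENNReal.ofReal (C * ρ k ^ q) := Finset.sum_le_sum (hballμ k)
        _ = ((G k).card : ℝ≥0∞) * ENNReal.ofReal (C * ρ k ^ q) := by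
            rw [Finset.sum_const, nsmul_eq_mul]
        _ ≤ ENNReal.ofReal ((R + (rk k / 2) / 2) ^ n / ((rk k / 2) / 2) ^ n) *
            ENNReal.ofReal (C * ρ k ^ q) := mul_le_mul_left (hcard k) _
        _ = ENNReal.ofReal ((R + (rk k / 2) / 2) ^ n / ((rk k / 2) / 2) ^ n *
            (C * ρ k ^ q)) := by
            rw [← ENNReal.ofReal_mul (by positivity)]
        _ ≤ ENNReal.ofReal (β * γ ^ (k + K)) := ENNReal.ofReal_le_ofReal (hreal k)
    have hsummable : Summable (fun k : ℕ => β * γ ^ (k + K)) := by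
      have : (fun k : ℕ => β * γ ^ (k + K)) = fun k : ℕ => (β * γ ^ K) * γ ^ k := by
        funext k; rw [pow_add]; ring
      rw [this]
      exact (summable_geometric_of_lt_one hγ0.le hγ1).mul_left _
    have htsum : ∑' k : ℕ, (β * γ ^ (k + K)) = β * γ ^ K * (1 - γ)⁻¹ := by
      have : (fun k : ℕ => β * γ ^ (k + K)) = fun k : ℕ => (β * γ ^ K) * γ ^ k := by
        funext k; rw [pow_add]; ring
      rw [this, tsum_mul_left, tsum_geometric_of_lt_one hγ0.le hγ1]
    have hlt : β * γ ^ K * (1 - γ)⁻¹ < ε := by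
      have h1γ : (0:ℝ) < 1 - γ := by linarith
      rw [lt_div_iff₀ hβ] at hKε
      have : β * γ ^ K < ε * (1 - γ) := by nlinarith
      calc β * γ ^ K * (1 - γ)⁻¹ < ε * (1 - γ) * (1 - γ)⁻¹ := by
            apply mul_lt_mul_of_pos_right this (by positivity)
        _ = ε := by field_simp
    calc μ A ≤ ∑' k : ℕ, μ (⋃ g ∈ G k, ball g (ρ k)) := by
          rw [hA_def]; exact measure_iUnion_le _
      _ ≤ ∑' k : ℕ, ENNReal.ofReal (β * γ ^ (k + K)) := ENNReal.tsum_le_tsum hAk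
      _ = ENNReal.ofReal (∑' k : ℕ, (β * γ ^ (k + K))) :=
          (ENNReal.ofReal_tsum_of_nonneg (fun k => by positivity) hsummable).symm
      _ < ENNReal.ofReal ε := by
          rw [htsum]
          exact (ENNReal.ofReal_lt_ofReal_iff hε).mpr hlt
  · -- lower inclusion
    rintro x ⟨hxΩ, hxspt⟩
    refine ⟨hxspt, ?_⟩
    obtain ⟨δ, hδ0, hδΩ⟩ := Metric.isOpen_iff.mp hΩo x hxΩ
    set c := ENNReal.ofReal (1 / (C ^ 2 * (2:ℝ) ^ (q + h))) with hc_def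
    have h2qh : (0:ℝ) < (2:ℝ) ^ (q + h) := Real.rpow_pos_of_pos (by norm_num) _
    have hc0 : 0 < c := by
      rw [hc_def, ENNReal.ofReal_pos]
      positivity
    refine lt_of_lt_of_le hc0 (le_limsup_of_frequently_le' ?_)
    have htend0 : Tendsto (fun k : ℕ => 2 * rk k) atTop (nhds 0) := by
      have h1 : Tendsto (fun k : ℕ => (1/2:ℝ) ^ k) atTop (nhds 0) :=
        tendsto_pow_atTop_nhds_zero_of_lt_one (by norm_num) (by norm_num)
      have h2 := h1.const_mul (2 * (1/2:ℝ) ^ K)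
      rw [mul_zero] at h2
      exact h2.congr fun k => by
        show 2 * (1/2:ℝ) ^ K * (1/2) ^ k = 2 * rk k
        show 2 * (1/2:ℝ) ^ K * (1/2) ^ k = 2 * (1/2:ℝ) ^ (k + K)
        rw [pow_add]; ring
    have htend : Tendsto (fun k : ℕ => 2 * rk k) atTop (nhdsWithin 0 (Ioi 0)) := by
      rw [tendsto_nhdsWithin_iff]
      exact ⟨htend0, Filter.Eventually.of_forall fun k =>
        Set.mem_Ioi.mpr (by have := hrk0 k; positivity)⟩
    have hev : ∀ᶠ k : ℕ in atTop, c ≤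
        μ (ball x (2 * rk k) ∩ A) /
          (μ (ball x (2 * rk k)) * ENNReal.ofReal ((2 * rk k) ^ h)) := by
      filter_upwards [htend0.eventually_lt_const (lt_min hδ0 hrbar)] with k hk
      have hr0' : (0:ℝ) < 2 * rk k := by have := hrk0 k; positivity
      have hrδ : 2 * rk k < δ := lt_of_lt_of_le hk (min_le_left _ _)
      have hrrbar : 2 * rk k < rbar := lt_of_lt_of_le hk (min_le_right _ _)
      have hxS : x ∈ S k := by
        refine ⟨hxspt, fun z hz => hδΩ (ball_subset_ball ?_ hz)⟩
        have := hrk0 k; linarith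
      obtain ⟨g, hgG, hgd⟩ := hGcov k x hxS
      have hgspt : g ∈ spt μ := (hGsub k hgG).1
      have hball : ball g (ρ k) ⊆ ball x (2 * rk k) := by
        intro z hz
        rw [mem_ball] at hz ⊢
        have h1 : dist z x ≤ dist z g + dist g x := dist_triangle _ _ _
        have h2 : dist g x < rk k := by rw [dist_comm]; exact hgd
        have h3 := hρr k
        linarith
      have hballA : ball g (ρ k) ⊆ A := by
        rw [hA_def]
        exact fun z hz => Set.mem_iUnion.mpr ⟨k, Set.mem_iUnion₂.mpr ⟨g, hgG, hz⟩⟩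
      have hnum : ENNReal.ofReal (ρ k ^ p / C) ≤ μ (ball x (2 * rk k) ∩ A) :=
        le_trans (hbound g hgspt (ρ k) (hρ0 k) (lt_of_le_of_lt (hρr k) (hrkr k))).1
          (measure_mono (subset_inter hball hballA))
      have hden : μ (ball x (2 * rk k)) * ENNReal.ofReal ((2 * rk k) ^ h) ≤
          ENNReal.ofReal (C * (2 * rk k) ^ (q + h)) := by
        calc μ (ball x (2 * rk k)) * ENNReal.ofReal ((2 * rk k) ^ h)
            ≤ ENNReal.ofReal (C * (2 * rk k) ^ q) * ENNReal.ofReal ((2 * rk k) ^ h) :=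
              mul_le_mul_left (hbound x hxspt _ hr0' hrrbar).2 _
          _ = ENNReal.ofReal (C * (2 * rk k) ^ q * (2 * rk k) ^ h) :=
              (ENNReal.ofReal_mul (by positivity)).symm
          _ = ENNReal.ofReal (C * (2 * rk k) ^ (q + h)) := by
              rw [Real.rpow_add hr0']; ring_nf
      refine le_trans ?_ (ENNReal.div_le_div hnum hden)
      rw [hc_def, ← ENNReal.ofReal_div_of_pos (by positivity)]
      apply ENNReal.ofReal_le_ofReal
      have e1 : ρ k ^ p = rk k ^ (t * p) := by
        show (rk k ^ t) ^ p = rk k ^ (t * p)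
        exact (Real.rpow_mul (hrk0 k).le t p).symm
      have e2 : rk k ^ (q + h) ≤ ρ k ^ p := by
        rw [e1]
        exact Real.rpow_le_rpow_of_exponent_ge (hrk0 k) (hrk1 k) htp.le
      have e3 : (2 * rk k) ^ (q + h) = (2:ℝ) ^ (q + h) * rk k ^ (q + h) :=
        Real.mul_rpow (by norm_num) (hrk0 k).le
      have hrkqh : (0:ℝ) < rk k ^ (q + h) := Real.rpow_pos_of_pos (hrk0 k) _
      rw [e3]
      calc 1 / (C ^ 2 * (2:ℝ) ^ (q + h))
          = (rk k ^ (q + h) / C) / (C * ((2:ℝ) ^ (q + h) * rk k ^ (q + h))) := by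
            field_simp
        _ ≤ (ρ k ^ p / C) / (C * ((2:ℝ) ^ (q + h) * rk k ^ (q + h))) := by
            gcongr
    exact htend.frequently hev.frequently
  · -- upper inclusion
    rintro x ⟨hxspt, hpos⟩
    refine ⟨?_, hxspt⟩
    by_contra hxc
    obtain ⟨δ, hδ0, hδc⟩ := Metric.isOpen_iff.mp isClosed_closure.isOpen_compl x hxc
    have hev : ∀ᶠ r in nhdsWithin (0:ℝ) (Ioi 0),
        μ (ball x r ∩ A) / (μ (ball x r) * ENNReal.ofReal (r ^ h)) = 0 := by
      filter_upwards [Ioo_mem_nhdsGT_of_mem (⟨le_refl (0:ℝ), hδ0⟩ : (0:ℝ) ∈ Ico 0 δ)]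
        with r hr
      have hempty : ball x r ∩ A = ∅ := by
        rw [Set.eq_empty_iff_forall_notMem]
        rintro z ⟨hz1, hz2⟩
        exact hδc (ball_subset_ball hr.2.le hz1) (subset_closure (hAΩ hz2))
      rw [hempty, measure_empty, ENNReal.zero_div]
    have hzero : Filter.limsup
        (fun r : ℝ => μ (ball x r ∩ A) / (μ (ball x r) * ENNReal.ofReal (r ^ h)))
        (nhdsWithin 0 (Ioi 0)) = 0 := by
      rw [limsup_congr hev]
      exact limsup_const 0
    rw [hzero] at hpos
    exact lt_irrefl 0 hpos
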